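/- Consider the four-node phase-fading HD-MRC with reception rates as affine functions of p=(p₀,p₁,p₂,p₃): r₂ = (p₀+p₁)γ₂, r₃ = p₀a₃ + p₂b₃ with positive constants satisfying γ₂ > a₃. Among all schedules p with p₀+p₁+p₂+p₃=1, p_i ≥ 0, and r₂(p)=r₃(p), the common value r₂(p)=r₃(p) is maximized by p* with p₀* = b₃/(b₃ + γ₂ − a₃), p₂* = (γ₂ − a₃)/(b₃ + γ₂ − a₃), p₁* = p₃* = 0, achieving common value γ₂·b₃/(b₃ + γ₂ − a₃). -/

import Mathlib

/-- |B| = 2 case of the optimal schedule for the four-node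
phase-fading HD-MRC: among all schedules with r₂ = r₃, the common value is
maximized by p* = (b₃/(b₃+γ₂−a₃), 0, (γ₂−a₃)/(b₃+γ₂−a₃), 0), achieving
γ₂·b₃/(b₃+γ₂−a₃). -/
theorem stmt_8 (γ₂ a₃ b₃ : ℝ) (hγ₂ : 0 < γ₂) (ha₃ : 0 < a₃) (hb₃ : 0 < b₃)
    (hga : a₃ < γ₂)
    (r₂ r₃ : (Fin 4 → ℝ) → ℝ)
    (hr₂ : ∀ q, r₂ q = (q 0 + q 1) * γ₂)
    (hr₃ : ∀ q, r₃ q = q 0 * a₃ + q 2 * b₃)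
    (p : Fin 4 → ℝ)
    (hp : p = ![b₃ / (b₃ + γ₂ - a₃), 0, (γ₂ - a₃) / (b₃ + γ₂ - a₃), 0]) :
    (∀ i, 0 ≤ p i) ∧ p 0 + p 1 + p 2 + p 3 = 1 ∧
    r₂ p = r₃ p ∧ r₂ p = γ₂ * b₃ / (b₃ + γ₂ - a₃) ∧
    ∀ q : Fin 4 → ℝ, (∀ i, 0 ≤ q i) → q 0 + q 1 + q 2 + q 3 = 1 →
      r₂ q = r₃ q → r₂ q ≤ γ₂ * b₃ / (b₃ + γ₂ - a₃) := by
  have hD : 0 < b₃ + γ₂ - a₃ := by linarith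
  subst hp
  refine ⟨?_, ?_, ?_, ?_, ?_⟩
  · intro i
    fin_cases i <;> simp
    all_goals apply div_nonneg <;> linarith
  · simp
    field_simp
    ring
  · rw [hr₂, hr₃]
    simp
    field_simp
    ring
  · rw [hr₂]
    simp
    field_simp
  · intro q hq hsum heq
    rw [hr₂, hr₃] at heq
    rw [hr₂]
    rw [le_div_iff₀ hD]
    have h0 := hq 0
    have h1 := hq 1
    have h2 := hq 2
    have h3 := hq 3
    have key : (q 0 + q 1) * (b₃ + γ₂ - a₃) ≤ b₃ := by nlinarith
    nlinarith
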